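/- arXiv:1802.08436 — 2 statements merged into one kernel-verified Lean document; each statement's English description precedes it below -/
import Mathlib

section
/- Let F be a field of characteristic p > 0 with p-degree 1, and let F ⊆ K be a finite purely inseparable field extension. Then K is generated over F by a single element, i.e. K = F(α) for some α ∈ K. -/
open Polynomial IntermediateField

section Ext
variable {F : Type*} [Field F] {p : ℕ} [Fact p.Prime] [CharP F p]

-- sanity checks
example (L : Subfield F) (x : ↥L) : algebraMap (↥L) F x = ↑x := rfl
example (L : Subfield F) (z : ↥L) (m : F) : z • m = (↑z : F) * m := rfl
example (L : Subfield F) : Derivation ℤ (↥L) F → True := fun _ => trivial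

lemma pth_power_injective (a b : F) (h : a ^ p = b ^ p) : a = b := by
  have := frobenius_inj F p
  exact this (by simpa [frobenius_def] using h)

set_option maxHeartbeats 1000000 in
theorem extend_derivation (L : Subfield F) (d : Derivation ℤ (↥L) F)
    (hpow : ∀ z : F, z ^ p ∈ L) (hdpow : ∀ (z : F) (h : z ^ p ∈ L), d ⟨z ^ p, h⟩ = 0)
    (t v : F) (ht : t ∉ L) :
    ∃ (L' : Subfield F) (_ : L' = ((↥L)⟮t⟯ : IntermediateField (↥L) F).toSubfield)
      (h : L ≤ L') (d' : Derivation ℤ (↥L') F),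
      (∃ htL' : t ∈ L', d' ⟨t, htL'⟩ = v) ∧
      (∀ (a : F) (ha : a ∈ L), d' ⟨a, h ha⟩ = d ⟨a, ha⟩) := by
  have hp0 : p ≠ 0 := (Fact.out : p.Prime).ne_zero
  set c : ↥L := ⟨t ^ p, hpow t⟩ with hc
  -- the evaluation map ψ
  set ψ : PolynomialModule (↥L) F →ₗ[↥L] F :=
    (PolynomialModule.eval t).restrictScalars (↥L) ∘ₗ
      PolynomialModule.map F (LinearMap.id : F →ₗ[↥L] F) with hψ
  have hψsmul : ∀ (f : (↥L)[X]) (q : PolynomialModule (↥L) F),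
      ψ (f • q) = aeval t f * ψ q := by
    intro f q
    simp only [hψ, LinearMap.comp_apply, LinearMap.coe_restrictScalars]
    rw [PolynomialModule.map_smul, PolynomialModule.eval_smul]
    rw [smul_eq_mul, eval_map, ← aeval_def]
  set E : (↥L)[X] → F := fun f => ψ (d.mapCoeffs f) + (aeval t (derivative f)) * v with hE
  have hEadd : ∀ f g, E (f + g) = E f + E g := by
    intro f g; simp only [hE, map_add]; ring
  have hEC : ∀ a : ↥L, E (C a) = d a := by
    intro a
    simp only [hE, Derivation.mapCoeffs_C, derivative_C, map_zero, zero_mul, add_zero, hψ,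
      LinearMap.comp_apply, LinearMap.coe_restrictScalars]
    rw [PolynomialModule.map_single, PolynomialModule.eval_single]
    simp
  have hEX : E X = v := by
    simp only [hE, Derivation.mapCoeffs_X, map_zero, derivative_X, map_one, one_mul, zero_add]
  have hEmul : ∀ f g, E (f * g) = aeval t f * E g + aeval t g * E f := by
    intro f g
    simp only [hE, Derivation.leibniz, map_add, hψsmul, derivative_mul, map_mul]
    ring
  have hminpoly : minpoly (↥L) t = X ^ p - C c := by
    refine (minpoly.eq_of_irreducible_of_monic ?_ ?_ (monic_X_pow_sub_C c hp0)).symm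
    · refine X_pow_sub_C_irreducible_of_prime Fact.out (fun b hb => ht ?_)
      have : (b : F) ^ p = t ^ p := by
        have := congrArg (Subtype.val) hb
        simpa using this
      have := pth_power_injective (b : F) t this
      exact this ▸ b.2
    · rw [map_sub, aeval_X_pow, aeval_C]
      exact sub_eq_zero.mpr rfl
  have hEq0 : E (X ^ p - C c) = 0 := by
    have h1 : d.mapCoeffs ((X : (↥L)[X]) ^ p - C c) = 0 := by
      rw [map_sub, X_pow_eq_monomial, Derivation.mapCoeffs_monomial, Derivation.mapCoeffs_C,
        d.map_one_eq_zero, hdpow t (hpow t)]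
      simp
    have h2 : derivative ((X : (↥L)[X]) ^ p - C c) = 0 := by
      rw [derivative_sub, derivative_C, derivative_X_pow]
      simp [CharP.cast_eq_zero (↥L) p]
    simp [hE, h1, h2]
  have hEker : ∀ f, aeval t f = 0 → E f = 0 := by
    intro f hf
    obtain ⟨g, rfl⟩ : (X ^ p - C c) ∣ f := hminpoly ▸ minpoly.dvd (↥L) t hf
    rw [hEmul, hEq0]
    have : aeval t ((X : (↥L)[X]) ^ p - C c) = 0 := by
      rw [map_sub, aeval_X_pow, aeval_C]; exact sub_eq_zero.mpr rfl
    simp [this]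
  have hEwd : ∀ f g, aeval t f = aeval t g → E f = E g := by
    intro f g hfg
    have h1 : E (g + (f - g)) = E g + E (f - g) := hEadd _ _
    have h2 : E (f - g) = 0 := hEker _ (by rw [map_sub, hfg, sub_self])
    simpa [h2] using h1
  have hint : IsIntegral (↥L) t := by
    refine ⟨X ^ p - C c, monic_X_pow_sub_C c hp0, ?_⟩
    rw [← aeval_def, map_sub, aeval_X_pow, aeval_C]; exact sub_eq_zero.mpr rfl
  set L' : Subfield F := ((↥L)⟮t⟯ : IntermediateField (↥L) F).toSubfield with hL'
  have hmemL' : ∀ z : F, z ∈ L' ↔ z ∈ (↥L)⟮t⟯ := fun z =>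
    IntermediateField.mem_toSubfield _ _
  have hLL' : L ≤ L' := by
    intro a ha
    exact (hmemL' a).mpr (((↥L)⟮t⟯).algebraMap_mem ⟨a, ha⟩)
  have htL' : t ∈ L' := (hmemL' t).mpr (subset_adjoin _ _ rfl)
  have hsurj : ∀ z : ↥L', ∃ f : (↥L)[X], aeval t f = (z : F) := by
    intro z
    have hz : (z : F) ∈ ((↥L)⟮t⟯).toSubalgebra := (hmemL' _).mp z.2
    rw [adjoin_simple_toSubalgebra_of_isAlgebraic hint.isAlgebraic,
      Algebra.adjoin_singleton_eq_range_aeval] at hz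
    exact hz
  choose sec hsec using hsurj
  set Df : ↥L' → F := fun z => E (sec z) with hDf
  have hDkey : ∀ (z : ↥L') (f : (↥L)[X]), aeval t f = (z : F) → Df z = E f := by
    intro z f hf
    exact hEwd _ _ (by rw [hsec z, hf])
  have hadd : ∀ z w : ↥L', Df (z + w) = Df z + Df w := by
    intro z w
    rw [hDkey (z + w) (sec z + sec w) (by rw [map_add, hsec, hsec]; rfl), hEadd]
  have hmul : ∀ z w : ↥L', Df (z * w) = (z : F) * Df w + (w : F) * Df z := by
    intro z w
    rw [hDkey (z * w) (sec z * sec w) (by rw [map_mul, hsec, hsec]; rfl), hEmul, hsec, hsec]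
  refine ⟨L', hL', hLL', ⟨(AddMonoidHom.mk' Df hadd).toIntLinearMap, ?_, ?_⟩, ⟨htL', ?_⟩, ?_⟩
  · show Df 1 = 0
    rw [hDkey 1 (C 1) (by simp), hEC, d.map_one_eq_zero]
  · intro z w
    show Df (z * w) = z • Df w + w • Df z
    rw [hmul]; rfl
  · show Df ⟨t, htL'⟩ = v
    rw [hDkey _ X (by simp), hEX]
  · intro a ha
    show Df ⟨a, hLL' ha⟩ = d ⟨a, ha⟩
    rw [hDkey _ (C ⟨a, ha⟩) (by rw [aeval_C]; rfl), hEC]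
end Ext
section Zorn
variable {F : Type*} [Field F] {p : ℕ} [Fact p.Prime] [CharP F p]

structure PData (F : Type*) [Field F] (p : ℕ) (x y : F) : Type _ where
  L : Subfield F
  D : Derivation ℤ (↥L) F
  pow_mem : ∀ z : F, z ^ p ∈ L
  d_pow : ∀ (z : F) (h : z ^ p ∈ L), D ⟨z ^ p, h⟩ = 0
  hx : x ∈ L
  hy : y ∈ L
  Dx : D ⟨x, hx⟩ = 1
  Dy : D ⟨y, hy⟩ = 0

def PRel {x y : F} (s t : PData F p x y) : Prop :=
  ∃ h : s.L ≤ t.L, ∀ (a : F) (ha : a ∈ s.L), t.D ⟨a, h ha⟩ = s.D ⟨a, ha⟩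

theorem prel_refl {x y : F} (s : PData F p x y) : PRel s s := ⟨le_refl _, fun _ _ => rfl⟩

instance {x y : F} : IsRefl (PData F p x y) (PRel (p := p)) := ⟨prel_refl⟩

theorem prel_trans {x y : F} {s t u : PData F p x y} (h1 : PRel s t) (h2 : PRel t u) :
    PRel s u := by
  obtain ⟨h, hd⟩ := h1
  obtain ⟨h', hd'⟩ := h2
  exact ⟨h.trans h', fun a ha => (hd' a (h ha)).trans (hd a ha)⟩

set_option maxHeartbeats 1000000 in
theorem exists_derivation (x y : F)
    (hx : x ∉ (frobenius F p).fieldRange)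
    (hy : y ∉ ((↥((frobenius F p).fieldRange))⟮x⟯ :
        IntermediateField (↥((frobenius F p).fieldRange)) F).toSubfield) :
    ∃ D : Derivation ℤ F F, D x = 1 ∧ D y = 0 := by
  set Fp : Subfield F := (frobenius F p).fieldRange with hFp
  have hpow0 : ∀ z : F, z ^ p ∈ Fp := fun z => ⟨z, by simp [frobenius_def]⟩
  -- base : extend the zero derivation on Fp twice
  obtain ⟨L₁, hL₁eq, hle₁, d₁, ⟨hxL₁, hd₁x⟩, hext₁⟩ :=
    extend_derivation Fp (0 : Derivation ℤ (↥Fp) F) hpow0 (by simp) x 1 hx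
  have hyL₁ : y ∉ L₁ := by rw [hL₁eq]; exact hy
  have hpow1 : ∀ z : F, z ^ p ∈ L₁ := fun z => hle₁ (hpow0 z)
  have hdpow1 : ∀ (z : F) (h : z ^ p ∈ L₁), d₁ ⟨z ^ p, h⟩ = 0 := by
    intro z h
    have : (⟨z ^ p, h⟩ : ↥L₁) = ⟨z ^ p, hle₁ (hpow0 z)⟩ := rfl
    rw [this, hext₁ (z ^ p) (hpow0 z)]; simp
  obtain ⟨L₂, hL₂eq, hle₂, d₂, ⟨hyL₂, hd₂y⟩, hext₂⟩ :=
    extend_derivation L₁ d₁ hpow1 hdpow1 y 0 hyL₁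
  have base : PData F p x y :=
    { L := L₂, D := d₂
      pow_mem := fun z => hle₂ (hpow1 z)
      d_pow := by
        intro z h
        have : (⟨z ^ p, h⟩ : ↥L₂) = ⟨z ^ p, hle₂ (hpow1 z)⟩ := rfl
        rw [this, hext₂ (z ^ p) (hpow1 z)]; exact hdpow1 z _
      hx := hle₂ hxL₁
      hy := hyL₂
      Dx := by rw [hext₂ x hxL₁]; exact hd₁x
      Dy := hd₂y }
  -- Zorn
  have hchains : ∀ c : Set (PData F p x y), IsChain PRel c → ∃ ub, ∀ a ∈ c, PRel a ub := by
    intro c hc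
    rcases c.eq_empty_or_nonempty with rfl | ⟨s₀, hs₀⟩
    · exact ⟨base, by simp⟩
    have hub : ∀ s ∈ c, ∀ s' ∈ c, ∃ u ∈ c, PRel s u ∧ PRel s' u := by
      intro s hs s' hs'
      rcases eq_or_ne s s' with rfl | hne
      · exact ⟨s, hs, prel_refl s, prel_refl s⟩
      rcases hc.total hs hs' with h | h
      · exact ⟨s', hs', h, prel_refl s'⟩
      · exact ⟨s, hs, prel_refl s, h⟩
    classical
    set Lc : Subfield F :=
      { carrier := {a | ∃ s ∈ c, a ∈ s.L}
        one_mem' := ⟨s₀, hs₀, one_mem _⟩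
        zero_mem' := ⟨s₀, hs₀, zero_mem _⟩
        mul_mem' := by
          rintro a b ⟨s, hs, ha⟩ ⟨s', hs', hb⟩
          obtain ⟨u, hu, ⟨h1, -⟩, ⟨h2, -⟩⟩ := hub s hs s' hs'
          exact ⟨u, hu, mul_mem (h1 ha) (h2 hb)⟩
        add_mem' := by
          rintro a b ⟨s, hs, ha⟩ ⟨s', hs', hb⟩
          obtain ⟨u, hu, ⟨h1, -⟩, ⟨h2, -⟩⟩ := hub s hs s' hs'
          exact ⟨u, hu, add_mem (h1 ha) (h2 hb)⟩
        neg_mem' := by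
          rintro a ⟨s, hs, ha⟩
          exact ⟨s, hs, neg_mem ha⟩
        inv_mem' := by
          rintro a ⟨s, hs, ha⟩
          exact ⟨s, hs, inv_mem ha⟩ } with hLc
    have hmem : ∀ a : F, a ∈ Lc ↔ ∃ s ∈ c, a ∈ s.L := fun a => Iff.rfl
    have pick : ∀ a : ↥Lc, ∃ s, s ∈ c ∧ (a : F) ∈ s.L := by
      intro a
      obtain ⟨s, hs, ha⟩ := (hmem a).mp a.2
      exact ⟨s, hs, ha⟩
    choose ps hps1 hps2 using pick
    set Dcf : ↥Lc → F := fun a => (ps a).D ⟨a, hps2 a⟩ with hDcf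
    have hco : ∀ (s : PData F p x y), s ∈ c → ∀ (a : F) (h : a ∈ s.L) (h' : a ∈ Lc),
        Dcf ⟨a, h'⟩ = s.D ⟨a, h⟩ := by
      intro s hs a h h'
      obtain ⟨u, hu, ⟨h1, hd1⟩, ⟨h2, hd2⟩⟩ := hub s hs (ps ⟨a, h'⟩) (hps1 ⟨a, h'⟩)
      have e1 := hd2 a (hps2 ⟨a, h'⟩)
      have e2 := hd1 a h
      simp only [hDcf]
      rw [← e1, ← e2]
    have hadd : ∀ a b : ↥Lc, Dcf (a + b) = Dcf a + Dcf b := by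
      intro a b
      obtain ⟨u, hu, ⟨h1, -⟩, ⟨h2, -⟩⟩ := hub (ps a) (hps1 a) (ps b) (hps1 b)
      have haU : (a : F) ∈ u.L := h1 (hps2 a)
      have hbU : (b : F) ∈ u.L := h2 (hps2 b)
      have habU : ((a + b : ↥Lc) : F) ∈ u.L := add_mem haU hbU
      rw [hco u hu _ habU _, hco u hu _ haU a.2, hco u hu _ hbU b.2]
      have : (⟨((a + b : ↥Lc) : F), habU⟩ : ↥u.L) = ⟨a, haU⟩ + ⟨b, hbU⟩ := rfl
      rw [this, map_add]
    have hmul : ∀ a b : ↥Lc, Dcf (a * b) = (a : F) * Dcf b + (b : F) * Dcf a := by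
      intro a b
      obtain ⟨u, hu, ⟨h1, -⟩, ⟨h2, -⟩⟩ := hub (ps a) (hps1 a) (ps b) (hps1 b)
      have haU : (a : F) ∈ u.L := h1 (hps2 a)
      have hbU : (b : F) ∈ u.L := h2 (hps2 b)
      have habU : ((a * b : ↥Lc) : F) ∈ u.L := mul_mem haU hbU
      rw [hco u hu _ habU _, hco u hu _ haU a.2, hco u hu _ hbU b.2]
      have : (⟨((a * b : ↥Lc) : F), habU⟩ : ↥u.L) = ⟨a, haU⟩ * ⟨b, hbU⟩ := rfl
      rw [this, Derivation.leibniz]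
      rfl
    have hxLc : x ∈ Lc := ⟨s₀, hs₀, s₀.hx⟩
    have hyLc : y ∈ Lc := ⟨s₀, hs₀, s₀.hy⟩
    refine ⟨{ L := Lc
              D := ⟨(AddMonoidHom.mk' Dcf hadd).toIntLinearMap, ?_, ?_⟩
              pow_mem := fun z => ⟨s₀, hs₀, s₀.pow_mem z⟩
              d_pow := ?_
              hx := hxLc
              hy := hyLc
              Dx := ?_
              Dy := ?_ }, ?_⟩
    · show Dcf 1 = 0
      have h1 : (1 : ↥Lc) = ⟨1, one_mem _⟩ := rfl
      rw [h1, hco s₀ hs₀ 1 (one_mem _) (one_mem _)]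
      have h2 : (⟨1, one_mem _⟩ : ↥s₀.L) = 1 := rfl
      rw [h2]
      exact s₀.D.map_one_eq_zero
    · intro a b
      show Dcf (a * b) = a • Dcf b + b • Dcf a
      rw [hmul]; rfl
    · intro z h
      show Dcf ⟨z ^ p, h⟩ = 0
      rw [hco s₀ hs₀ _ (s₀.pow_mem z) h]
      exact s₀.d_pow z _
    · show Dcf ⟨x, hxLc⟩ = 1
      rw [hco s₀ hs₀ x s₀.hx hxLc, s₀.Dx]
    · show Dcf ⟨y, hyLc⟩ = 0
      rw [hco s₀ hs₀ y s₀.hy hyLc, s₀.Dy]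
    · intro s hs
      refine ⟨fun a ha => ⟨s, hs, ha⟩, fun a ha => ?_⟩
      show Dcf ⟨a, _⟩ = s.D ⟨a, ha⟩
      exact hco s hs a ha _
  obtain ⟨m, hm⟩ := exists_maximal_of_chains_bounded hchains (fun h1 h2 => prel_trans h1 h2)
  -- maximal element has L = ⊤
  have hall : ∀ t : F, t ∈ m.L := by
    intro t
    by_contra ht
    obtain ⟨L', hL'eq, hle, d', ⟨htL', hd't⟩, hext⟩ :=
      extend_derivation m.L m.D m.pow_mem m.d_pow t 0 ht
    let hnew : PData F p x y :=
      { L := L', D := d'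
        pow_mem := fun z => hle (m.pow_mem z)
        d_pow := by
          intro z h
          have : (⟨z ^ p, h⟩ : ↥L') = ⟨z ^ p, hle (m.pow_mem z)⟩ := rfl
          rw [this, hext (z ^ p) (m.pow_mem z)]
          exact m.d_pow z _
        hx := hle m.hx
        hy := hle m.hy
        Dx := by rw [hext x m.hx]; exact m.Dx
        Dy := by rw [hext y m.hy]; exact m.Dy }
    have h1 : PRel m hnew := ⟨hle, hext⟩
    obtain ⟨h2, -⟩ := hm hnew h1
    exact ht (h2 htL')
  have haddF : ∀ a b : F, m.D ⟨a + b, hall _⟩ = m.D ⟨a, hall a⟩ + m.D ⟨b, hall b⟩ := by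
    intro a b
    have : (⟨a + b, hall _⟩ : ↥m.L) = ⟨a, hall a⟩ + ⟨b, hall b⟩ := rfl
    rw [this, map_add]
  refine ⟨⟨(AddMonoidHom.mk' (fun z => m.D ⟨z, hall z⟩) haddF).toIntLinearMap, ?_, ?_⟩, ?_, ?_⟩
  · show m.D ⟨1, hall 1⟩ = 0
    have : (⟨1, hall 1⟩ : ↥m.L) = 1 := rfl
    rw [this]; exact m.D.map_one_eq_zero
  · intro a b
    show m.D ⟨a * b, hall _⟩ = a • m.D ⟨b, hall b⟩ + b • m.D ⟨a, hall a⟩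
    have : (⟨a * b, hall _⟩ : ↥m.L) = ⟨a, hall a⟩ * ⟨b, hall b⟩ := rfl
    rw [this, Derivation.leibniz]
    rfl
  · show m.D ⟨x, hall x⟩ = 1
    have : (⟨x, hall x⟩ : ↥m.L) = ⟨x, m.hx⟩ := rfl
    rw [this]; exact m.Dx
  · show m.D ⟨y, hall y⟩ = 0
    have : (⟨y, hall y⟩ : ↥m.L) = ⟨y, m.hy⟩ := rfl
    rw [this]; exact m.Dy
end Zorn
section PDeg
variable {p : ℕ} [Fact p.Prime]

theorem minpoly_pth_root {K E : Type*} [Field K] [Field E] [Algebra K E] [CharP E p]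
    (x : E) (hx : x ∉ (algebraMap K E).range) (c : K) (hc : algebraMap K E c = x ^ p) :
    IsIntegral K x ∧ minpoly K x = X ^ p - C c ∧
      Module.finrank K (↥K⟮x⟯) = p := by
  have hp0 : p ≠ 0 := (Fact.out : p.Prime).ne_zero
  have haev : aeval x ((X : K[X]) ^ p - C c) = 0 := by
    rw [map_sub, aeval_X_pow, aeval_C, hc, sub_self]
  have hint : IsIntegral K x := ⟨X ^ p - C c, monic_X_pow_sub_C c hp0, by rw [← aeval_def, haev]⟩
  have hmin : minpoly K x = X ^ p - C c := by
    refine (minpoly.eq_of_irreducible_of_monic ?_ haev (monic_X_pow_sub_C c hp0)).symm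
    refine X_pow_sub_C_irreducible_of_prime Fact.out (fun b hb => hx ?_)
    have h1 : algebraMap K E (b ^ p) = x ^ p := by rw [hb, hc]
    have h2 : (algebraMap K E b) ^ p = x ^ p := by rw [← map_pow, h1]
    have h3 : algebraMap K E b = x := frobenius_inj E p (by simpa [frobenius_def] using h2)
    exact ⟨b, h3⟩
  refine ⟨hint, hmin, ?_⟩
  rw [IntermediateField.adjoin.finrank hint, hmin, natDegree_X_pow_sub_C]

variable {F : Type*} [Field F] [CharP F p]

theorem pdeg_le_one (hpdeg : Module.rank F (Ω[F⁄ℤ]) = 1) :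
    ∀ x : F, x ∉ (frobenius F p).fieldRange → ∀ y : F,
      y ∈ ((↥((frobenius F p).fieldRange))⟮x⟯ :
        IntermediateField (↥((frobenius F p).fieldRange)) F).toSubfield := by
  set Fp : Subfield F := (frobenius F p).fieldRange with hFp
  have hrange : ∀ z : F, z ∈ (algebraMap (↥Fp) F).range ↔ z ∈ Fp := by
    intro z
    constructor
    · rintro ⟨b, rfl⟩; exact b.2
    · intro h; exact ⟨⟨z, h⟩, rfl⟩
  have hcmem : ∀ z : F, z ^ p ∈ Fp := fun z => ⟨z, by simp [frobenius_def]⟩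
  intro x hx y
  by_contra hy
  obtain ⟨D₁, h11, h10⟩ := exists_derivation x y hx hy
  have hxr : x ∉ (algebraMap (↥Fp) F).range := fun h => hx ((hrange x).mp h)
  obtain ⟨hintx, -, hfx⟩ := minpoly_pth_root (K := ↥Fp) x hxr ⟨x ^ p, hcmem x⟩ rfl
  have hyFp : y ∉ Fp := by
    intro h
    exact hy ((IntermediateField.mem_toSubfield _ _).mpr
      (((↥Fp)⟮x⟯).algebraMap_mem ⟨y, h⟩))
  have hyr : y ∉ (algebraMap (↥Fp) F).range := fun h => hyFp ((hrange y).mp h)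
  obtain ⟨hinty, -, hfy⟩ := minpoly_pth_root (K := ↥Fp) y hyr ⟨y ^ p, hcmem y⟩ rfl
  have hxFpy : x ∉ ((↥Fp)⟮y⟯ : IntermediateField (↥Fp) F).toSubfield := by
    intro hmem
    have hxmem : x ∈ ((↥Fp)⟮y⟯ : IntermediateField (↥Fp) F) :=
      (IntermediateField.mem_toSubfield _ _).mp hmem
    have hle : (↥Fp)⟮x⟯ ≤ (↥Fp)⟮y⟯ :=
      IntermediateField.adjoin_le_iff.mpr (by simpa using hxmem)
    haveI := IntermediateField.adjoin.finiteDimensional hinty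
    have heq : (↥Fp)⟮x⟯ = (↥Fp)⟮y⟯ :=
      IntermediateField.eq_of_le_of_finrank_le hle (by rw [hfx, hfy])
    refine hy ((IntermediateField.mem_toSubfield _ _).mpr ?_)
    rw [heq]
    exact IntermediateField.subset_adjoin _ _ rfl
  obtain ⟨D₂, h21, h20⟩ := exists_derivation y x hyFp hxFpy
  have hli : LinearIndependent F ![KaehlerDifferential.D ℤ F x, KaehlerDifferential.D ℤ F y] := by
    rw [LinearIndependent.pair_iff]
    intro s t hst
    constructor
    · have h := congrArg D₁.liftKaehlerDifferential hst
      simpa [h11, h10] using h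
    · have h := congrArg D₂.liftKaehlerDifferential hst
      simpa [h21, h20] using h
  have h2 := hli.cardinal_lift_le_rank
  rw [hpdeg, Cardinal.mk_fintype] at h2
  simp at h2

theorem findim_aux {K E : Type*} [Field K] [Field E] [Algebra K E] [CharP E p]
    (hdep : ∀ x : E, x ∉ (algebraMap K E).range → ∀ y : E, y ∈ K⟮x⟯)
    (hpow : ∀ x : E, ∃ c : K, algebraMap K E c = x ^ p) :
    FiniteDimensional K E ∧ Module.finrank K E ≤ p := by
  by_cases hex : ∃ x : E, x ∉ (algebraMap K E).range
  · obtain ⟨x, hx⟩ := hex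
    obtain ⟨c, hc⟩ := hpow x
    obtain ⟨hintx, -, hfx⟩ := minpoly_pth_root (K := K) x hx c hc
    have hTop : K⟮x⟯ = ⊤ := by
      rw [eq_top_iff]
      intro y _
      exact hdep x hx y
    haveI h1 : FiniteDimensional K (↥K⟮x⟯) :=
      IntermediateField.adjoin.finiteDimensional hintx
    haveI h2 : FiniteDimensional K (↥(⊤ : IntermediateField K E)) := hTop ▸ h1
    haveI h3 : FiniteDimensional K E :=
      (IntermediateField.topEquiv (F := K) (E := E)).toLinearEquiv.finiteDimensional
    refine ⟨h3, ?_⟩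
    have e1 : Module.finrank K E =
        Module.finrank K (↥(⊤ : IntermediateField K E)) :=
      (IntermediateField.topEquiv (F := K) (E := E)).toLinearEquiv.finrank_eq.symm
    rw [e1, ← hTop, hfx]
  · push_neg at hex
    have hsurj : Function.Surjective (Algebra.linearMap K E) := fun z => by
      obtain ⟨b, hb⟩ := hex z
      exact ⟨b, hb⟩
    haveI hfin : Module.Finite K E := Module.Finite.of_surjective _ hsurj
    refine ⟨hfin, ?_⟩
    have hbt : (⊥ : Subalgebra K E) = ⊤ := by
      rw [eq_top_iff]
      intro z _
      exact hex z
    have := Subalgebra.bot_eq_top_iff_finrank_eq_one.mp hbt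
    rw [this]
    exact (Fact.out : p.Prime).one_lt.le

theorem F_findim (hpdeg : Module.rank F (Ω[F⁄ℤ]) = 1) :
    FiniteDimensional (↥((frobenius F p).fieldRange)) F ∧
      Module.finrank (↥((frobenius F p).fieldRange)) F ≤ p := by
  refine findim_aux ?_ ?_
  · intro x hx y
    have hx' : x ∉ (frobenius F p).fieldRange := by
      intro h
      exact hx ⟨⟨x, h⟩, rfl⟩
    exact (IntermediateField.mem_toSubfield _ _).mp (pdeg_le_one hpdeg x hx' y)
  · intro z
    exact ⟨⟨z ^ p, ⟨z, by simp [frobenius_def]⟩⟩, rfl⟩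
end PDeg
section Twist
universe u v
variable {p : ℕ} [Fact p.Prime]

/-- rank of `B` as a module over `A` via the ring hom `f`. -/
noncomputable def rkh {A : Type u} {B : Type v} [Field A] [Field B] (f : A →+* B) : Cardinal.{v} :=
  letI := f.toAlgebra
  Module.rank A B

theorem rkh_fieldRange {A : Type u} {B : Type v} [Field A] [Field B] (f : A →+* B) :
    Module.rank (↥f.fieldRange) B = rkh f := by
  letI := f.toAlgebra
  have hmem : ∀ x, f x ∈ f.fieldRange := fun x => ⟨x, rfl⟩
  let g : A →+* ↥f.fieldRange := f.codRestrict f.fieldRange hmem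
  have hbij : Function.Bijective g := by
    constructor
    · intro a b hab
      have : f a = f b := congrArg Subtype.val hab
      exact f.injective this
    · rintro ⟨z, x, rfl⟩
      exact ⟨x, rfl⟩
  let e : ↥f.fieldRange ≃+* A := (RingEquiv.ofBijective g hbij).symm
  refine Algebra.rank_eq_of_equiv_equiv e (RingEquiv.refl B) ?_
  ext z
  show f (e z) = (z : B)
  obtain ⟨x, rfl⟩ := hbij.2 z
  have : e (g x) = x := (RingEquiv.ofBijective g hbij).symm_apply_apply x
  rw [this]
  rfl

theorem rkh_comp {A : Type u} {B C : Type v} [Field A] [Field B] [Field C]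
    (f : A →+* B) (g : B →+* C) :
    rkh (g.comp f) = rkh f * rkh g := by
  letI iAB : Algebra A B := f.toAlgebra
  letI iBC : Algebra B C := g.toAlgebra
  letI iAC : Algebra A C := (g.comp f).toAlgebra
  haveI : IsScalarTower A B C := IsScalarTower.of_algebraMap_eq (fun _ => rfl)
  exact (rank_mul_rank A B C).symm

theorem rkh_comp' {A B : Type u} {C : Type v} [Field A] [Field B] [Field C]
    (f : A →+* B) (g : B →+* C) :
    Cardinal.lift.{v} (rkh f) * Cardinal.lift.{u} (rkh g) =
      Cardinal.lift.{u} (rkh (g.comp f)) := by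
  letI iAB : Algebra A B := f.toAlgebra
  letI iBC : Algebra B C := g.toAlgebra
  letI iAC : Algebra A C := (g.comp f).toAlgebra
  haveI : IsScalarTower A B C := IsScalarTower.of_algebraMap_eq (fun _ => rfl)
  exact lift_rank_mul_lift_rank A B C

theorem rkh_algebraMap {A : Type u} {B : Type v} [Field A] [Field B] [Algebra A B] :
    rkh (algebraMap A B) = Module.rank A B := by
  exact @Algebra.rank_eq_of_equiv_equiv A B _ _ ((algebraMap A B).toAlgebra) A _ B _ _
    (RingEquiv.refl A) (RingEquiv.refl B) rfl

/-- The key "Frobenius twist" count: for a finite extension `K / F` of char `p` fields,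
`[K : K^p] = [F : F^p]`. -/
theorem rank_frobenius_eq {F : Type u} {K : Type v} [Field F] [Field K] [Algebra F K]
    [CharP F p] [CharP K p] [FiniteDimensional F K]
    [Module.Finite (↥((frobenius F p).fieldRange)) F] :
    Module.rank (↥((frobenius K p).fieldRange)) K =
      ↑(Module.finrank (↥((frobenius F p).fieldRange)) F) := by
  have hcomm : (frobenius K p).comp (algebraMap F K) =
      (algebraMap F K).comp (frobenius F p) := by
    ext z
    simp [frobenius_def, map_pow]
  set eN : ℕ := Module.finrank (↥((frobenius F p).fieldRange)) F with heN
  have he : rkh (frobenius F p) = (eN : Cardinal.{u}) := by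
    rw [← rkh_fieldRange, heN, Module.finrank_eq_rank]
  set d : Cardinal.{v} := rkh (algebraMap F K) with hd
  have hdval : d = Module.rank F K := rkh_algebraMap
  have hdfin : d < Cardinal.aleph0 := by
    rw [hdval, ← Module.finrank_eq_rank]
    exact Cardinal.nat_lt_aleph0 _
  have hdpos : d ≠ 0 := by
    rw [hdval]
    exact (rank_pos (R := F) (M := K)).ne'
  set a : Cardinal.{v} := rkh (frobenius K p) with ha
  -- main equation
  have h1 : d * a = rkh ((frobenius K p).comp (algebraMap F K)) := (rkh_comp _ _).symm
  have h2 : Cardinal.lift.{v} (rkh (frobenius F p)) * Cardinal.lift.{u} d =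
      Cardinal.lift.{u} (rkh ((algebraMap F K).comp (frobenius F p))) := rkh_comp' _ _
  rw [hcomm] at h1
  rw [← h1, he, Cardinal.lift_natCast, Cardinal.lift_mul] at h2
  -- h2 : ↑eN * lift d = lift d * lift a
  have hafin : Cardinal.lift.{u} a < Cardinal.aleph0 := by
    have h1le : (1 : Cardinal) ≤ Cardinal.lift.{u} d :=
      Cardinal.one_le_iff_ne_zero.mpr (by simpa using hdpos)
    have hle2 : Cardinal.lift.{u} a ≤ Cardinal.lift.{u} d * Cardinal.lift.{u} a := by
      calc Cardinal.lift.{u} a = 1 * Cardinal.lift.{u} a := (one_mul _).symm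
        _ ≤ Cardinal.lift.{u} d * Cardinal.lift.{u} a := mul_le_mul_left h1le _
    rw [← h2] at hle2
    refine lt_of_le_of_lt hle2 (Cardinal.mul_lt_aleph0 (Cardinal.nat_lt_aleph0 _) ?_)
    rwa [Cardinal.lift_lt_aleph0]
  have h3 : Cardinal.toNat (Cardinal.lift.{u} a) * Cardinal.toNat (Cardinal.lift.{u} d)
      = eN * Cardinal.toNat (Cardinal.lift.{u} d) := by
    rw [← Cardinal.toNat_mul, mul_comm (Cardinal.lift.{u} a), ← h2, Cardinal.toNat_mul,
      Cardinal.toNat_natCast]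
  have hdnat : Cardinal.toNat (Cardinal.lift.{u} d) ≠ 0 := by
    intro h0
    rw [Cardinal.toNat_eq_zero] at h0
    rcases h0 with h0 | h0
    · rw [Cardinal.lift_eq_zero] at h0
      exact hdpos h0
    · rw [Cardinal.aleph0_le_lift] at h0
      exact absurd h0 (not_le.mpr hdfin)
  have h4 : Cardinal.toNat (Cardinal.lift.{u} a) = eN :=
    Nat.eq_of_mul_eq_mul_right (Nat.pos_of_ne_zero hdnat) h3
  have h5 : Cardinal.lift.{u} a = (eN : Cardinal) := by
    rw [← h4]
    exact (Cardinal.cast_toNat_of_lt_aleph0 hafin).symm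
  have h6 : a = (eN : Cardinal.{v}) :=
    Cardinal.lift_inj.mp (by rw [h5, Cardinal.lift_natCast])
  rw [rkh_fieldRange]
  exact h6

theorem adjoin_aux {K E : Type*} [Field K] [Field E] [Algebra K E] [CharP E p]
    [FiniteDimensional K E] (hle : Module.finrank K E ≤ p)
    (x : E) (hx : x ∉ (algebraMap K E).range) (c : K) (hc : algebraMap K E c = x ^ p) :
    K⟮x⟯ = ⊤ := by
  obtain ⟨hint, -, hfx⟩ := minpoly_pth_root (K := K) x hx c hc
  haveI hft : FiniteDimensional K (↥(⊤ : IntermediateField K E)) :=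
    (IntermediateField.topEquiv (F := K) (E := E)).symm.toLinearEquiv.finiteDimensional
  refine IntermediateField.eq_of_le_of_finrank_le le_top ?_
  rw [hfx]
  calc Module.finrank K (↥(⊤ : IntermediateField K E)) = Module.finrank K E :=
        (IntermediateField.topEquiv (F := K) (E := E)).toLinearEquiv.finrank_eq
    _ ≤ p := hle
end Twist
open scoped KaehlerDifferential

set_option maxHeartbeats 1000000 in
/-- Let `F` be a field of characteristic `p > 0` with `p`-degree `1`
(the `p`-degree is the dimension of the space of absolute Kähler differentials
`Ω¹_{F/ℤ} = Ω¹_{F/F^p}` over `F`), and let `F ⊆ K` be a finite purely inseparable field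
extension. Then `K = F(α)` is generated over `F` by a single element. -/
theorem purelyInseparable_simple_of_pdeg_one (F K : Type*) [Field F] [Field K] [Algebra F K]
    (p : ℕ) [Fact p.Prime] [CharP F p]
    (hpdeg : Module.rank F (Ω[F⁄ℤ]) = 1)
    [FiniteDimensional F K] [IsPurelyInseparable F K] :
    ∃ α : K, IntermediateField.adjoin F {α} = ⊤ := by
  haveI : CharP K p := charP_of_injective_algebraMap (algebraMap F K).injective p
  obtain ⟨hFfd, hFle⟩ := F_findim (p := p) hpdeg
  haveI := hFfd
  have hrk : Module.rank (↥((frobenius K p).fieldRange)) K =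
      ↑(Module.finrank (↥((frobenius F p).fieldRange)) F) := rank_frobenius_eq
  haveI hKfd : FiniteDimensional (↥((frobenius K p).fieldRange)) K :=
    Module.rank_lt_aleph0_iff.mp (by rw [hrk]; exact Cardinal.nat_lt_aleph0 _)
  have hKle : Module.finrank (↥((frobenius K p).fieldRange)) K ≤ p := by
    apply Module.finrank_le_of_rank_le
    rw [hrk]
    exact_mod_cast hFle
  -- the chain of intermediate fields generated by p-power ranges
  set P : ℕ → IntermediateField F K :=
    fun n => IntermediateField.adjoin F (Set.range fun z : K => z ^ p ^ n) with hP
  have hP0 : P 0 = ⊤ := by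
    rw [eq_top_iff]
    intro z _
    exact IntermediateField.subset_adjoin F _ ⟨z, by simp⟩
  have hmem_pow : ∀ (n : ℕ) (z : K), z ^ p ^ n ∈ P n := fun n z =>
    IntermediateField.subset_adjoin F _ ⟨z, rfl⟩
  -- frobenius pushing
  have hfrob : ∀ (S : Set K) (E' : IntermediateField F K), (∀ s ∈ S, s ^ p ∈ E') →
      ∀ z ∈ IntermediateField.adjoin F S, z ^ p ∈ E' := by
    intro S E' hS z hz
    let T : IntermediateField F K :=
      Subfield.toIntermediateField (E'.toSubfield.comap (frobenius K p)) (by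
        intro x
        show frobenius K p (algebraMap F K x) ∈ E'.toSubfield
        rw [frobenius_def, ← map_pow]
        exact E'.algebraMap_mem (x ^ p))
    have hT : ∀ w : K, w ∈ T ↔ w ^ p ∈ E' := by
      intro w
      show frobenius K p w ∈ E'.toSubfield ↔ _
      rw [frobenius_def]
      rfl
    have hle : IntermediateField.adjoin F S ≤ T :=
      IntermediateField.adjoin_le_iff.mpr (fun s hs => (hT s).mpr (hS s hs))
    exact (hT z).mp (hle hz)
  -- eventually P N ≤ ⊥
  obtain ⟨N, hPbot⟩ : ∃ N, P N ≤ ⊥ := by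
    set b := Module.finBasis F K with hb
    choose ns hns using fun i => IsPurelyInseparable.pow_mem F p (b i)
    set N := Finset.univ.sup ns with hN
    refine ⟨N, ?_⟩
    have hbN : ∀ i, (b i) ^ p ^ N ∈ (⊥ : IntermediateField F K) := by
      intro i
      have h1 : (b i) ^ p ^ ns i ∈ (⊥ : IntermediateField F K) := by
        rw [IntermediateField.mem_bot]
        obtain ⟨w, hw⟩ := hns i
        exact ⟨w, hw⟩
      have hle : ns i ≤ N := Finset.le_sup (Finset.mem_univ i)
      have h2 : (b i) ^ p ^ N = ((b i) ^ p ^ ns i) ^ p ^ (N - ns i) := by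
        rw [← pow_mul, ← pow_add, Nat.add_sub_cancel' hle]
      rw [h2]
      exact pow_mem h1 _
    let T : IntermediateField F K :=
      Subfield.toIntermediateField ((⊥ : IntermediateField F K).toSubfield.comap
        (iterateFrobenius K p N)) (by
          intro x
          show iterateFrobenius K p N (algebraMap F K x) ∈
            (⊥ : IntermediateField F K).toSubfield
          rw [iterateFrobenius_def, ← map_pow]
          exact IntermediateField.algebraMap_mem _ (x ^ p ^ N))
    have hT : ∀ w : K, w ∈ T ↔ w ^ p ^ N ∈ (⊥ : IntermediateField F K) := by
      intro w
      show iterateFrobenius K p N w ∈ (⊥ : IntermediateField F K).toSubfield ↔ _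
      rw [iterateFrobenius_def]
      rfl
    have hTtop : ∀ z : K, z ∈ T := by
      intro z
      have hzspan : z ∈ Submodule.span F (Set.range ⇑b) := b.mem_span z
      have hsub : Submodule.span F (Set.range ⇑b) ≤
          Subalgebra.toSubmodule T.toSubalgebra := by
        rw [Submodule.span_le]
        rintro w ⟨i, rfl⟩
        exact (hT (b i)).mpr (hbN i)
      exact hsub hzspan
    refine IntermediateField.adjoin_le_iff.mpr ?_
    rintro w ⟨z, rfl⟩
    exact (hT z).mp (hTtop z)
  -- choose α
  by_cases hall : ∀ z : K, z ∈ P 1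
  · have hP1 : P 1 = ⊤ := eq_top_iff.mpr fun z _ => hall z
    have hPn : ∀ n, P n = ⊤ := by
      intro n
      induction n with
      | zero => exact hP0
      | succ n ih =>
        rw [eq_top_iff, ← hP1]
        refine IntermediateField.adjoin_le_iff.mpr ?_
        rintro w ⟨z, rfl⟩
        show z ^ p ^ 1 ∈ P (n + 1)
        rw [pow_one]
        refine hfrob (Set.range fun z : K => z ^ p ^ n) (P (n + 1)) ?_ z ?_
        · rintro s ⟨w', rfl⟩
          rw [← pow_mul, ← pow_succ]
          exact hmem_pow (n + 1) w'
        · show z ∈ P n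
          rw [ih]; trivial
    refine ⟨0, ?_⟩
    rw [IntermediateField.adjoin_zero, eq_top_iff, ← hPn N]
    exact hPbot
  · push_neg at hall
    obtain ⟨α, hα⟩ := hall
    set Kq : Subfield K := (frobenius K p).fieldRange with hKq
    have hαKq : α ∉ Kq := by
      rintro ⟨z, rfl⟩
      refine hα ?_
      show frobenius K p z ∈ P 1
      rw [frobenius_def]
      exact IntermediateField.subset_adjoin F _ ⟨z, by rw [pow_one]⟩
    have hαr : α ∉ (algebraMap (↥Kq) K).range := by
      rintro ⟨b, rfl⟩
      exact hαKq b.2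
    have htop : ((↥Kq)⟮α⟯ : IntermediateField (↥Kq) K) = ⊤ :=
      adjoin_aux hKle α hαr ⟨α ^ p, ⟨α, by simp [frobenius_def]⟩⟩ rfl
    set E : IntermediateField F K := IntermediateField.adjoin F {α} with hE
    have hsup : E ⊔ P 1 = ⊤ := by
      rw [eq_top_iff]
      intro z _
      have hz : z ∈ ((↥Kq)⟮α⟯ : IntermediateField (↥Kq) K) := by rw [htop]; trivial
      let T' : IntermediateField (↥Kq) K :=
        Subfield.toIntermediateField (E ⊔ P 1).toSubfield (by
          rintro ⟨w, z', rfl⟩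
          show frobenius K p z' ∈ (E ⊔ P 1).toSubfield
          have : frobenius K p z' ∈ P 1 := by
            rw [frobenius_def]
            exact IntermediateField.subset_adjoin F _ ⟨z', by rw [pow_one]⟩
          exact (le_sup_right : P 1 ≤ E ⊔ P 1) this)
      have hle : ((↥Kq)⟮α⟯ : IntermediateField (↥Kq) K) ≤ T' := by
        refine IntermediateField.adjoin_le_iff.mpr ?_
        rintro s rfl
        show s ∈ (E ⊔ P 1).toSubfield
        exact (le_sup_left : E ≤ E ⊔ P 1) (IntermediateField.subset_adjoin F {s} rfl)
      exact hle hz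
    have hEPn : ∀ n, E ⊔ P n = ⊤ := by
      intro n
      induction n with
      | zero => rw [hP0, sup_top_eq]
      | succ n ih =>
        have hP1le : P 1 ≤ E ⊔ P (n + 1) := by
          refine IntermediateField.adjoin_le_iff.mpr ?_
          rintro w ⟨z, rfl⟩
          show z ^ p ^ 1 ∈ E ⊔ P (n + 1)
          rw [pow_one]
          have hzmem : z ∈ IntermediateField.adjoin F ({α} ∪
              Set.range fun z : K => z ^ p ^ n) := by
            rw [IntermediateField.adjoin_union]
            show z ∈ E ⊔ P n
            rw [ih]; trivial
          refine hfrob _ (E ⊔ P (n + 1)) ?_ z hzmem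
          rintro s hs
          rcases hs with rfl | ⟨w', rfl⟩
          · exact (le_sup_left : E ≤ E ⊔ P (n+1))
              (pow_mem (IntermediateField.subset_adjoin F {s} rfl) p)
          · refine (le_sup_right : P (n+1) ≤ E ⊔ P (n+1)) ?_
            rw [← pow_mul, ← pow_succ]
            exact hmem_pow (n + 1) w'
        rw [eq_top_iff, ← hsup]
        calc E ⊔ P 1 ≤ E ⊔ (E ⊔ P (n + 1)) := sup_le_sup_left hP1le E
          _ = E ⊔ P (n + 1) := by rw [← sup_assoc, sup_idem]
    refine ⟨α, ?_⟩
    rw [eq_top_iff, ← hEPn N]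
    exact sup_le le_rfl (hPbot.trans bot_le)
end

section
/- Let κ be a field. The κ-algebra homomorphism κ[[a,b,c]]/(a² − b²c) → κ[[u,v]] defined by a ↦ uv, b ↦ u, c ↦ v² is injective, with image the subring κ[[u, uv, v²]]. -/
noncomputable section

def expMap6 (d : Fin 3 →₀ ℕ) : Fin 2 →₀ ℕ :=
  d 0 • (Finsupp.single 0 1 + Finsupp.single 1 1) + d 1 • Finsupp.single 0 1 +
    d 2 • Finsupp.single 1 2

def IsSubstHom6 (κ : Type*) [Field κ]
    (φ : MvPowerSeries (Fin 3) κ →ₐ[κ] MvPowerSeries (Fin 2) κ) : Prop :=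
  ∀ (f : MvPowerSeries (Fin 3) κ) (e : Fin 2 →₀ ℕ),
    MvPowerSeries.coeff e (φ f) =
      ∑ᶠ d : Fin 3 →₀ ℕ, if expMap6 d = e then MvPowerSeries.coeff d f else 0

def monomialSubring (κ : Type*) [Field κ] : Set (MvPowerSeries (Fin 2) κ) :=
  {f | ∀ d : Fin 2 →₀ ℕ, MvPowerSeries.coeff d f ≠ 0 →
    d ∈ AddSubmonoid.closure ({Finsupp.single 0 1, Finsupp.single 0 1 + Finsupp.single 1 1,
      Finsupp.single 1 2} : Set (Fin 2 →₀ ℕ))}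

def mk3 (a b c : ℕ) : Fin 3 →₀ ℕ := Finsupp.equivFunOnFinite.symm ![a, b, c]

@[simp] lemma mk3_apply0 (a b c : ℕ) : mk3 a b c 0 = a := rfl
@[simp] lemma mk3_apply1 (a b c : ℕ) : mk3 a b c 1 = b := rfl
@[simp] lemma mk3_apply2 (a b c : ℕ) : mk3 a b c 2 = c := rfl

@[simp] lemma expMap6_apply0 (d : Fin 3 →₀ ℕ) : expMap6 d 0 = d 0 + d 1 := by
  simp [expMap6, Finsupp.single_apply]

@[simp] lemma expMap6_apply1 (d : Fin 3 →₀ ℕ) : expMap6 d 1 = d 0 + 2 * d 2 := by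
  simp [expMap6, Finsupp.single_apply]; ring

lemma fin2_ext {e e' : Fin 2 →₀ ℕ} (h0 : e 0 = e' 0) (h1 : e 1 = e' 1) : e = e' := by
  ext i
  fin_cases i
  · exact h0
  · exact h1

lemma fin3_ext {d d' : Fin 3 →₀ ℕ} (h0 : d 0 = d' 0) (h1 : d 1 = d' 1) (h2 : d 2 = d' 2) :
    d = d' := by
  ext i
  fin_cases i
  · exact h0
  · exact h1
  · exact h2

lemma mk3_eta (d : Fin 3 →₀ ℕ) : mk3 (d 0) (d 1) (d 2) = d :=
  fin3_ext rfl rfl rfl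

/-- The canonical preimage exponent of `e`. -/
def dCan (e : Fin 2 →₀ ℕ) : Fin 3 →₀ ℕ := mk3 (e 1 % 2) (e 0 - e 1 % 2) (e 1 / 2)

lemma expMap6_dCan {e : Fin 2 →₀ ℕ} (he : e 1 % 2 ≤ e 0) : expMap6 (dCan e) = e := by
  apply fin2_ext
  · simp [dCan]; omega
  · simp [dCan]; omega

lemma dCan_expMap6 {d : Fin 3 →₀ ℕ} (hd : d 0 ≤ 1) : dCan (expMap6 d) = d := by
  apply fin3_ext <;> simp [dCan] <;> omega

lemma telescope {κ : Type*} [Field κ] (T : ℕ → ℕ → ℕ → κ) (a b c : ℕ) :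
    ∑ j ∈ Finset.range (min (b / 2) c + 1), T (a + 2 * j) (b - 2 * j) (c - j) =
      T a b c + (if 2 ≤ b ∧ 1 ≤ c then
        ∑ j ∈ Finset.range (min ((b - 2) / 2) (c - 1) + 1),
          T (a + 2 + 2 * j) (b - 2 - 2 * j) (c - 1 - j) else 0) := by
  by_cases h : 2 ≤ b ∧ 1 ≤ c
  · rw [if_pos h]
    have hm : min (b / 2) c = min ((b - 2) / 2) (c - 1) + 1 := by omega
    rw [hm, Finset.sum_range_succ']
    rw [add_comm]
    congr 1
    · apply Finset.sum_congr rfl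
      intro j _
      have e1 : a + 2 * (j + 1) = a + 2 + 2 * j := by ring
      have e2 : b - 2 * (j + 1) = b - 2 - 2 * j := by omega
      have e3 : c - (j + 1) = c - 1 - j := by omega
      rw [e1, e2, e3]
  · rw [if_neg h]
    have hm : min (b / 2) c = 0 := by omega
    rw [hm]
    norm_num

section Main

variable {κ : Type*} [Field κ]

open MvPowerSeries

def gP (κ : Type*) [Field κ] : MvPowerSeries (Fin 3) κ :=
  (X 0) ^ 2 - (X 1) ^ 2 * X 2

lemma gP_eq : gP κ = monomial (Finsupp.single 0 2) 1
    - monomial (Finsupp.single 1 2 + Finsupp.single 2 1) 1 := by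
  have hX2 : (X 2 : MvPowerSeries (Fin 3) κ) = monomial (Finsupp.single 2 1) 1 := by
    rw [← pow_one (X 2 : MvPowerSeries (Fin 3) κ), X_pow_eq]
  rw [gP, X_pow_eq, X_pow_eq, hX2, monomial_mul_monomial, one_mul]

def hF (f : MvPowerSeries (Fin 3) κ) : MvPowerSeries (Fin 3) κ :=
  fun d => ∑ j ∈ Finset.range (min (d 1 / 2) (d 2) + 1),
    MvPowerSeries.coeff (mk3 (d 0 + 2 + 2 * j) (d 1 - 2 * j) (d 2 - j)) f

def cF (f : MvPowerSeries (Fin 3) κ) : MvPowerSeries (Fin 3) κ :=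
  fun d => if d 0 ≤ 1 then
    ∑ j ∈ Finset.range (min (d 1 / 2) (d 2) + 1),
      MvPowerSeries.coeff (mk3 (d 0 + 2 * j) (d 1 - 2 * j) (d 2 - j)) f
  else 0

lemma cF_canonical (f : MvPowerSeries (Fin 3) κ) {d : Fin 3 →₀ ℕ} (hd : 1 < d 0) :
    MvPowerSeries.coeff d (cF f) = 0 := by
  rw [MvPowerSeries.coeff_apply, cF, if_neg (by omega)]

lemma sub1 (d : Fin 3 →₀ ℕ) : d - Finsupp.single 0 2 = mk3 (d 0 - 2) (d 1) (d 2) := by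
  apply fin3_ext <;> simp [Finsupp.tsub_apply, Finsupp.single_apply]

lemma sub2 (d : Fin 3 →₀ ℕ) :
    d - (Finsupp.single 1 2 + Finsupp.single 2 1) = mk3 (d 0) (d 1 - 2) (d 2 - 1) := by
  apply fin3_ext <;> simp [Finsupp.tsub_apply, Finsupp.single_apply]

lemma cond1 (d : Fin 3 →₀ ℕ) : Finsupp.single 0 2 ≤ d ↔ 2 ≤ d 0 := Finsupp.single_le_iff

lemma cond2 (d : Fin 3 →₀ ℕ) :
    Finsupp.single 1 2 + Finsupp.single 2 1 ≤ d ↔ 2 ≤ d 1 ∧ 1 ≤ d 2 := by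
  constructor
  · intro h
    have h1 := Finsupp.le_def.1 h 1
    have h2 := Finsupp.le_def.1 h 2
    simp [Finsupp.single_apply] at h1 h2
    exact ⟨h1, h2⟩
  · rintro ⟨h1, h2⟩
    rw [Finsupp.le_def]
    intro i
    fin_cases i <;> simp [Finsupp.single_apply] <;> omega

lemma decomp (f : MvPowerSeries (Fin 3) κ) : f = cF f + gP κ * hF f := by
  apply MvPowerSeries.ext
  intro d
  classical
  rw [map_add, gP_eq, sub_mul, map_sub, coeff_monomial_mul, coeff_monomial_mul, one_mul, one_mul]
  simp only [cond1, cond2, sub1, sub2]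
  have key := telescope (fun a b c => MvPowerSeries.coeff (mk3 a b c) f) (d 0) (d 1) (d 2)
  simp only [MvPowerSeries.coeff_apply]
  show f d = cF f d + ((if 2 ≤ d 0 then hF f (mk3 (d 0 - 2) (d 1) (d 2)) else 0)
      - (if 2 ≤ d 1 ∧ 1 ≤ d 2 then hF f (mk3 (d 0) (d 1 - 2) (d 2 - 1)) else 0))
  rw [cF, hF, hF]
  simp only [mk3_apply0, mk3_apply1, mk3_apply2]
  by_cases h0 : d 0 ≤ 1
  · rw [if_pos h0, if_neg (by omega)]
    have hfd : f d = MvPowerSeries.coeff (mk3 (d 0) (d 1) (d 2)) f := by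
      rw [mk3_eta, MvPowerSeries.coeff_apply]
    rw [hfd]
    rw [key]
    by_cases h12 : 2 ≤ d 1 ∧ 1 ≤ d 2
    · simp only [if_pos h12]
      ring
    · simp only [if_neg h12]
      ring
  · rw [if_neg h0, if_pos (by omega)]
    have hsum : ∑ j ∈ Finset.range (min (d 1 / 2) (d 2) + 1),
        MvPowerSeries.coeff (mk3 (d 0 - 2 + 2 + 2 * j) (d 1 - 2 * j) (d 2 - j)) f
        = ∑ j ∈ Finset.range (min (d 1 / 2) (d 2) + 1),
        MvPowerSeries.coeff (mk3 (d 0 + 2 * j) (d 1 - 2 * j) (d 2 - j)) f := by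
      apply Finset.sum_congr rfl
      intro j _
      have harith : d 0 - 2 + 2 + 2 * j = d 0 + 2 * j := by omega
      rw [harith]
    rw [hsum]
    have hfd : f d = MvPowerSeries.coeff (mk3 (d 0) (d 1) (d 2)) f := by
      rw [mk3_eta, MvPowerSeries.coeff_apply]
    rw [hfd]
    rw [key]
    by_cases h12 : 2 ≤ d 1 ∧ 1 ≤ d 2
    · simp only [if_pos h12]
      ring
    · simp only [if_neg h12]
      ring

lemma canonical_finsum (F : MvPowerSeries (Fin 3) κ)
    (hF0 : ∀ d : Fin 3 →₀ ℕ, 1 < d 0 → MvPowerSeries.coeff d F = 0) (e : Fin 2 →₀ ℕ) :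
    (∑ᶠ d : Fin 3 →₀ ℕ, if expMap6 d = e then MvPowerSeries.coeff d F else 0)
      = if expMap6 (dCan e) = e then MvPowerSeries.coeff (dCan e) F else 0 := by
  apply finsum_eq_single
  intro d hd
  by_cases he : expMap6 d = e
  · rw [if_pos he]
    by_cases h0 : d 0 ≤ 1
    · exfalso
      apply hd
      rw [← he, dCan_expMap6 h0]
    · exact hF0 d (by omega)
  · rw [if_neg he]

lemma phi_gP (φ : MvPowerSeries (Fin 3) κ →ₐ[κ] MvPowerSeries (Fin 2) κ)
    (hφ : IsSubstHom6 κ φ) : φ (gP κ) = 0 := by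
  classical
  apply MvPowerSeries.ext
  intro e
  rw [hφ, map_zero]
  set D1 : Fin 3 →₀ ℕ := Finsupp.single 0 2 with hD1def
  set D2 : Fin 3 →₀ ℕ := Finsupp.single 1 2 + Finsupp.single 2 1 with hD2def
  have hD1app : D1 0 = 2 ∧ D1 1 = 0 ∧ D1 2 = 0 := by
    refine ⟨?_, ?_, ?_⟩ <;> simp [hD1def, Finsupp.single_apply]
  have hD2app : D2 0 = 0 ∧ D2 1 = 2 ∧ D2 2 = 1 := by
    refine ⟨?_, ?_, ?_⟩ <;> simp [hD2def, Finsupp.single_apply]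
  have hD : D1 ≠ D2 := by
    intro h
    have := congrArg (fun x : Fin 3 →₀ ℕ => x 0) h
    omega
  have hE : expMap6 D1 = expMap6 D2 := by
    apply fin2_ext <;> simp <;> omega
  have hc1 : MvPowerSeries.coeff D1 (gP κ) = 1 := by
    rw [gP_eq, map_sub, coeff_monomial, coeff_monomial, if_pos rfl, if_neg hD]
    ring
  have hc2 : MvPowerSeries.coeff D2 (gP κ) = -1 := by
    rw [gP_eq, map_sub, coeff_monomial, coeff_monomial, if_pos rfl, if_neg (Ne.symm hD)]
    ring
  have hcoeff : ∀ d : Fin 3 →₀ ℕ, d ≠ D1 → d ≠ D2 → MvPowerSeries.coeff d (gP κ) = 0 := by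
    intro d h1 h2
    rw [gP_eq, map_sub, coeff_monomial, coeff_monomial, if_neg h1, if_neg h2]
    ring
  have hsupp : (Function.support fun d : Fin 3 →₀ ℕ =>
      if expMap6 d = e then MvPowerSeries.coeff d (gP κ) else 0) ⊆
      (({D1, D2} : Finset (Fin 3 →₀ ℕ)) : Set (Fin 3 →₀ ℕ)) := by
    intro d hdm
    rw [Function.mem_support] at hdm
    by_contra hnot
    simp only [Finset.coe_insert, Finset.coe_singleton, Set.mem_insert_iff,
      Set.mem_singleton_iff, not_or] at hnot
    apply hdm
    split
    · exact hcoeff d hnot.1 hnot.2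
    · rfl
  rw [finsum_eq_sum_of_support_subset _ hsupp, Finset.sum_pair hD, hc1, hc2, hE]
  by_cases he : expMap6 D2 = e
  · rw [if_pos he, if_pos he]; ring
  · rw [if_neg he, if_neg he]; ring

lemma expMap6_mem_closure (d : Fin 3 →₀ ℕ) :
    expMap6 d ∈ AddSubmonoid.closure ({Finsupp.single 0 1,
      Finsupp.single 0 1 + Finsupp.single 1 1, Finsupp.single 1 2} : Set (Fin 2 →₀ ℕ)) := by
  rw [expMap6]
  refine AddSubmonoid.add_mem _ (AddSubmonoid.add_mem _ ?_ ?_) ?_ <;>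
    apply AddSubmonoid.nsmul_mem <;> apply AddSubmonoid.subset_closure <;> simp

lemma closure_bound {e : Fin 2 →₀ ℕ}
    (he : e ∈ AddSubmonoid.closure ({Finsupp.single 0 1,
      Finsupp.single 0 1 + Finsupp.single 1 1, Finsupp.single 1 2} : Set (Fin 2 →₀ ℕ))) :
    e 1 % 2 ≤ e 0 := by
  refine AddSubmonoid.closure_induction ?_ ?_ ?_ he
  · intro x hx
    rcases hx with h | h | h <;> subst h <;> simp [Finsupp.single_apply]
  · simp
  · intro x y _ _ hx hy
    simp only [Finsupp.add_apply]
    omega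

end Main

section Final

variable {κ : Type*} [Field κ]

open MvPowerSeries

def lift6 (f : MvPowerSeries (Fin 2) κ) : MvPowerSeries (Fin 3) κ :=
  fun d => if d 0 ≤ 1 then MvPowerSeries.coeff (expMap6 d) f else 0

lemma coeff_lift6 (f : MvPowerSeries (Fin 2) κ) (d : Fin 3 →₀ ℕ) :
    MvPowerSeries.coeff d (lift6 f) =
      if d 0 ≤ 1 then MvPowerSeries.coeff (expMap6 d) f else 0 := rfl

end Final

/-- The `κ`-algebra homomorphism `κ[[a,b,c]]/(a² − b²c) → κ[[u,v]]` defined by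
`a ↦ uv`, `b ↦ u`, `c ↦ v²` is injective (i.e. the kernel of the substitution map on
`κ[[a,b,c]]` is exactly the ideal `(a² − b²c)`), with image the subring `κ[[u, uv, v²]]`. -/
theorem substHom6_ker_and_range (κ : Type*) [Field κ]
    (φ : MvPowerSeries (Fin 3) κ →ₐ[κ] MvPowerSeries (Fin 2) κ) (hφ : IsSubstHom6 κ φ) :
    RingHom.ker φ.toRingHom =
      Ideal.span {(MvPowerSeries.X 0) ^ 2 - (MvPowerSeries.X 1) ^ 2 * MvPowerSeries.X 2} ∧
    Set.range φ = monomialSubring κ := by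
  classical
  have hg0 : φ (gP κ) = 0 := phi_gP φ hφ
  constructor
  · apply le_antisymm
    · intro f hf
      rw [RingHom.mem_ker] at hf
      have hf' : φ f = 0 := hf
      have hdec := decomp (κ := κ) f
      have hφc : φ (cF f) = 0 := by
        have h := congrArg φ hdec
        rw [map_add, map_mul, hg0, zero_mul, add_zero] at h
        rw [← h, hf']
      have hcF : cF f = 0 := by
        apply MvPowerSeries.ext
        intro d
        rw [map_zero]
        by_cases hd : d 0 ≤ 1
        · have h1 := hφ (cF f) (expMap6 d)
          rw [hφc, map_zero] at h1
          rw [canonical_finsum (cF f) (fun d' hd' => cF_canonical f hd') (expMap6 d)] at h1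
          rw [dCan_expMap6 hd, if_pos rfl] at h1
          exact h1.symm
        · exact cF_canonical f (by omega)
      have hfe : f = gP κ * hF f := by
        conv_lhs => rw [hdec]
        rw [hcF, zero_add]
      show f ∈ Ideal.span {gP κ}
      rw [Ideal.mem_span_singleton]
      exact ⟨hF f, hfe⟩
    · rw [Ideal.span_le]
      intro x hx
      rw [Set.mem_singleton_iff] at hx
      subst hx
      rw [SetLike.mem_coe, RingHom.mem_ker]
      exact hg0
  · apply Set.Subset.antisymm
    · rintro f ⟨F, rfl⟩
      intro e he
      rw [hφ] at he
      have hex : ∃ d : Fin 3 →₀ ℕ,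
          (if expMap6 d = e then MvPowerSeries.coeff d F else 0) ≠ 0 := by
        by_contra hcon
        push_neg at hcon
        exact he ((finsum_congr hcon).trans finsum_zero)
      obtain ⟨d, hd⟩ := hex
      have hde : expMap6 d = e := by
        by_contra h
        rw [if_neg h] at hd
        exact hd rfl
      rw [← hde]
      exact expMap6_mem_closure d
    · intro f hf
      have hFcan : ∀ d : Fin 3 →₀ ℕ, 1 < d 0 →
          MvPowerSeries.coeff d (lift6 f) = 0 := by
        intro d hd
        rw [coeff_lift6, if_neg (by omega)]
      refine ⟨lift6 f, ?_⟩
      apply MvPowerSeries.ext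
      intro e
      rw [hφ, canonical_finsum (lift6 f) hFcan e]
      by_cases h : expMap6 (dCan e) = e
      · rw [if_pos h, coeff_lift6, if_pos (by simp [dCan]; omega)]
        rw [h]
      · rw [if_neg h]
        by_contra hne
        have hne' : MvPowerSeries.coeff e f ≠ 0 := fun h0 => hne h0.symm
        exact h (expMap6_dCan (closure_bound (hf e hne')))
end
end
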